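/- Almost optimal profiles for the Modica–Mortola transition energy: Let V : ℝ → ℝ be a continuous function with V ≥ 0 everywhere, and set c_V = ∫_0^1 √(V(t)) dt. Then for every δ > 0 there exist T > 0 and a continuously differentiable function v : [0,T] → ℝ with v(0) = 0, v(T) = 1, and 0 ≤ v(t) ≤ 1 for all t ∈ [0,T], such that ∫_0^T ( V(v(t)) + (v'(t))² ) dt ≤ 2 c_V + δ. -/

import Mathlib

open Real intervalIntegral Filter Set

private lemma sqrt_add_le' (a b : ℝ) (ha : 0 ≤ a) (hb : 0 ≤ b) :
    Real.sqrt (a + b) ≤ Real.sqrt a + Real.sqrt b := by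
  rw [show a + b = Real.sqrt a ^ 2 + Real.sqrt b ^ 2 by
    rw [Real.sq_sqrt ha, Real.sq_sqrt hb]]
  have h1 := Real.sqrt_nonneg a
  have h2 := Real.sqrt_nonneg b
  rw [show Real.sqrt a ^ 2 + Real.sqrt b ^ 2 =
      (Real.sqrt a + Real.sqrt b) ^ 2 - 2 * (Real.sqrt a * Real.sqrt b) by ring]
  calc Real.sqrt ((Real.sqrt a + Real.sqrt b) ^ 2 - 2 * (Real.sqrt a * Real.sqrt b))
      ≤ Real.sqrt ((Real.sqrt a + Real.sqrt b) ^ 2) := by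
        apply Real.sqrt_le_sqrt; nlinarith
    _ = Real.sqrt a + Real.sqrt b := Real.sqrt_sq (by positivity)

/-- Almost optimal profiles for the Modica–Mortola transition energy: if `V : ℝ → ℝ` is
continuous and nonnegative and `c_V = ∫_0^1 √(V t) dt`, then for every `δ > 0` there
exist `T > 0` and a `C¹` function `v` with `v 0 = 0`, `v T = 1`, `0 ≤ v ≤ 1` on `[0,T]`,
and `∫_0^T (V (v t) + (v' t)²) dt ≤ 2 c_V + δ`. -/
theorem modica_mortola_almost_optimal_profile
    (V : ℝ → ℝ) (hVcont : Continuous V) (hVnonneg : ∀ t : ℝ, 0 ≤ V t)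
    (cV : ℝ) (hcV : cV = ∫ t in (0:ℝ)..1, Real.sqrt (V t)) :
    ∀ δ : ℝ, 0 < δ → ∃ T : ℝ, 0 < T ∧ ∃ v : ℝ → ℝ,
      ContDiff ℝ 1 v ∧ v 0 = 0 ∧ v T = 1 ∧
      (∀ t ∈ Set.Icc (0:ℝ) T, 0 ≤ v t ∧ v t ≤ 1) ∧
      (∫ t in (0:ℝ)..T, (V (v t) + (deriv v t) ^ 2)) ≤ 2 * cV + δ := by
  intro δ hδ
  set ε : ℝ := (δ / 2) ^ 2 with hε_def
  have hε : 0 < ε := by positivity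
  have hsqrtε : Real.sqrt ε = δ / 2 := by
    rw [hε_def, Real.sqrt_sq (by linarith)]
  -- clamp
  set c : ℝ → ℝ := fun u => max 0 (min u 1) with hc_def
  have hc_cont : Continuous c := by fun_prop
  have hc_mem : ∀ u, c u ∈ Set.Icc (0:ℝ) 1 := by
    intro u
    constructor
    · exact le_max_left _ _
    · exact max_le (by norm_num) (min_le_right _ _)
  have hc_eq : ∀ u ∈ Set.Icc (0:ℝ) 1, c u = u := by
    intro u hu
    simp only [hc_def]
    rw [min_eq_left hu.2, max_eq_right hu.1]
  set Vc : ℝ → ℝ := fun u => V (c u) with hVc_def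
  have hVc_cont : Continuous Vc := hVcont.comp hc_cont
  have hVc_nonneg : ∀ u, 0 ≤ Vc u := fun u => hVnonneg _
  have hVc_eq : ∀ u ∈ Set.Icc (0:ℝ) 1, Vc u = V u := fun u hu => by
    simp only [hVc_def, hc_eq u hu]
  -- bound on Vc
  obtain ⟨M, hM⟩ : ∃ M, ∀ u, Vc u ≤ M := by
    obtain ⟨x, -, hx⟩ := (isCompact_Icc (a := (0:ℝ)) (b := 1)).exists_isMaxOn
      (Set.nonempty_Icc.2 zero_le_one) (hVcont.continuousOn)
    exact ⟨V x, fun u => hx (hc_mem u)⟩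
  have hM0 : 0 ≤ M := le_trans (hVc_nonneg 0) (hM 0)
  -- g
  set g : ℝ → ℝ := fun u => (Real.sqrt (Vc u + ε))⁻¹ with hg_def
  have hpos : ∀ u, 0 < Vc u + ε := fun u => by
    have := hVc_nonneg u; linarith
  have hsq_pos : ∀ u, 0 < Real.sqrt (Vc u + ε) := fun u => Real.sqrt_pos.2 (hpos u)
  have hg_pos : ∀ u, 0 < g u := fun u => inv_pos.2 (hsq_pos u)
  have hg_cont : Continuous g := by
    apply Continuous.inv₀
    · exact (hVc_cont.add continuous_const).sqrt
    · exact fun u => (hsq_pos u).ne'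
  set b : ℝ := (Real.sqrt (M + ε))⁻¹ with hb_def
  have hb_pos : 0 < b := inv_pos.2 (Real.sqrt_pos.2 (by linarith))
  have hg_lb : ∀ u, b ≤ g u := by
    intro u
    apply inv_anti₀ (hsq_pos u)
    exact Real.sqrt_le_sqrt (by have := hM u; linarith)
  -- h
  set h : ℝ → ℝ := fun x => ∫ u in (0:ℝ)..x, g u with hh_def
  have hh_deriv : ∀ x, HasDerivAt h (g x) x := by
    intro x
    exact intervalIntegral.integral_hasDerivAt_right
      (hg_cont.intervalIntegrable _ _)
      (hg_cont.stronglyMeasurableAtFilter _ _) hg_cont.continuousAt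
  have hh_mono : StrictMono h := by
    apply strictMono_of_deriv_pos
    intro x
    rw [(hh_deriv x).deriv]
    exact hg_pos x
  have hh_lb : ∀ x : ℝ, 0 ≤ x → b * x ≤ h x := by
    intro x hx
    have : (∫ u in (0:ℝ)..x, b) ≤ ∫ u in (0:ℝ)..x, g u := by
      apply intervalIntegral.integral_mono_on hx
        (intervalIntegrable_const) (hg_cont.intervalIntegrable _ _)
      intro u _; exact hg_lb u
    simpa [mul_comm] using this
  have hh_ub : ∀ x : ℝ, x ≤ 0 → h x ≤ b * x := by
    intro x hx
    have : (∫ u in x..(0:ℝ), b) ≤ ∫ u in x..(0:ℝ), g u := by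
      apply intervalIntegral.integral_mono_on hx
        (intervalIntegrable_const) (hg_cont.intervalIntegrable _ _)
      intro u _; exact hg_lb u
    have h0 : h x = -∫ u in x..(0:ℝ), g u := intervalIntegral.integral_symm x 0
    rw [h0]
    have : b * (0 - x) ≤ ∫ u in x..(0:ℝ), g u := by
      simpa [mul_comm] using this
    linarith
  have hh_cont : Continuous h :=
    continuous_iff_continuousAt.2 fun x => (hh_deriv x).continuousAt
  have hh_surj : Function.Surjective h := by
    apply hh_cont.surjective
    · apply Filter.tendsto_atTop_mono' _ _
        (Filter.Tendsto.const_mul_atTop hb_pos Filter.tendsto_id)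
      filter_upwards [Filter.eventually_ge_atTop (0:ℝ)] with x hx
      exact hh_lb x hx
    · apply Filter.tendsto_atBot_mono' _ _
        (Filter.Tendsto.const_mul_atBot hb_pos Filter.tendsto_id)
      filter_upwards [Filter.eventually_le_atBot (0:ℝ)] with x hx
      exact hh_ub x hx
  -- the inverse function v
  set e : ℝ ≃o ℝ := StrictMono.orderIsoOfSurjective h hh_mono hh_surj with he_def
  set v : ℝ → ℝ := fun t => e.symm t with hv_def
  have hv_cont : Continuous v := (OrderIso.toHomeomorph e.symm).continuous
  have hhv : ∀ t, h (v t) = t := fun t =>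
    StrictMono.orderIsoOfSurjective_self_symm_apply h hh_mono hh_surj t
  have hvh : ∀ x, v (h x) = x := fun x =>
    StrictMono.orderIsoOfSurjective_symm_apply_self h hh_mono hh_surj x
  have hv_mono : Monotone v := e.symm.monotone
  have hv_deriv : ∀ t, HasDerivAt v (Real.sqrt (Vc (v t) + ε)) t := by
    intro t
    have hd : HasDerivAt v (g (v t))⁻¹ t := by
      apply HasDerivAt.of_local_left_inverse hv_cont.continuousAt
        (hh_deriv (v t)) (hg_pos (v t)).ne'
      exact Filter.Eventually.of_forall hhv
    have : (g (v t))⁻¹ = Real.sqrt (Vc (v t) + ε) := by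
      rw [show g (v t) = (Real.sqrt (Vc (v t) + ε))⁻¹ from rfl, inv_inv]
    rwa [this] at hd
  have hv0 : v 0 = 0 := by
    have h00 : h 0 = 0 := by simp [hh_def]
    have := hvh 0
    rwa [h00] at this
  set T : ℝ := h 1 with hT_def
  have hT_pos : 0 < T := lt_of_lt_of_le (by linarith [hb_pos] : (0:ℝ) < b * 1)
    (hh_lb 1 zero_le_one)
  have hvT : v T = 1 := hvh 1
  have hv_range : ∀ t ∈ Set.Icc (0:ℝ) T, 0 ≤ v t ∧ v t ≤ 1 := by
    intro t ht
    constructor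
    · rw [← hv0]; exact hv_mono ht.1
    · rw [← hvT]; exact hv_mono ht.2
  have hderiv_eq : ∀ t, deriv v t = Real.sqrt (Vc (v t) + ε) :=
    fun t => (hv_deriv t).deriv
  have hv_cd : ContDiff ℝ 1 v := by
    rw [contDiff_one_iff_deriv]
    constructor
    · exact fun t => (hv_deriv t).differentiableAt
    · have : (deriv v) = fun t => Real.sqrt (Vc (v t) + ε) := funext hderiv_eq
      rw [this]
      exact ((hVc_cont.comp hv_cont).add continuous_const).sqrt
  refine ⟨T, hT_pos, v, hv_cd, hv0, hvT, hv_range, ?_⟩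
  -- energy computation
  set F : ℝ → ℝ := fun u => (2 * Vc u + ε) / Real.sqrt (Vc u + ε) with hF_def
  have hF_cont : Continuous F := by
    apply Continuous.div ((continuous_const.mul hVc_cont).add continuous_const)
      (hVc_cont.add continuous_const).sqrt
    exact fun u => (hsq_pos u).ne'
  have key : (∫ t in (0:ℝ)..T, (V (v t) + (deriv v t) ^ 2))
      = ∫ u in (0:ℝ)..1, F u := by
    have h1 : ∀ t ∈ Set.uIcc (0:ℝ) T,
        V (v t) + (deriv v t) ^ 2 = deriv v t • F (v t) := by
      intro t ht
      rw [Set.uIcc_of_le hT_pos.le] at ht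
      obtain ⟨h0, h1'⟩ := hv_range t ht
      rw [hderiv_eq, hF_def]
      have hV : V (v t) = Vc (v t) := (hVc_eq (v t) ⟨h0, h1'⟩).symm
      rw [Real.sq_sqrt (hpos (v t)).le, hV]
      field_simp [(hsq_pos (v t)).ne']
      rw [smul_eq_mul, mul_div_assoc', mul_div_right_comm, div_self (hsq_pos (v t)).ne', one_mul]
      ring
    rw [intervalIntegral.integral_congr h1]
    have := intervalIntegral.integral_comp_smul_deriv
      (f := v) (f' := deriv v) (g := F) (a := 0) (b := T)
      (fun x _ => hderiv_eq x ▸ hv_deriv x)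
      (by
        have : (deriv v) = fun t => Real.sqrt (Vc (v t) + ε) := funext hderiv_eq
        rw [this]
        exact (((hVc_cont.comp hv_cont).add continuous_const).sqrt).continuousOn)
      hF_cont
    rw [hv0, hvT] at this
    simpa using this
  rw [key]
  have hFle : ∀ u ∈ Set.Icc (0:ℝ) 1, F u ≤ 2 * Real.sqrt (V u) + δ := by
    intro u hu
    have h1 : F u ≤ 2 * Real.sqrt (Vc u + ε) := by
      rw [hF_def, div_le_iff₀ (hsq_pos u)]
      have := Real.mul_self_sqrt (hpos u).le
      nlinarith [hε]
    have h2 : Real.sqrt (Vc u + ε) ≤ Real.sqrt (Vc u) + Real.sqrt ε :=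
      sqrt_add_le' _ _ (hVc_nonneg u) hε.le
    have h3 : Real.sqrt (Vc u) = Real.sqrt (V u) := by rw [hVc_eq u hu]
    rw [h3, hsqrtε] at h2
    linarith
  calc (∫ u in (0:ℝ)..1, F u)
      ≤ ∫ u in (0:ℝ)..1, (2 * Real.sqrt (V u) + δ) := by
        apply intervalIntegral.integral_mono_on zero_le_one
          (hF_cont.intervalIntegrable _ _)
          (((continuous_const.mul hVcont.sqrt).add continuous_const).intervalIntegrable _ _)
        exact hFle
    _ = 2 * cV + δ := by
        rw [intervalIntegral.integral_add (f := fun u => 2 * Real.sqrt (V u)) (g := fun _ => δ)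
          ((continuous_const.mul hVcont.sqrt).intervalIntegrable _ _)
          (intervalIntegrable_const),
          intervalIntegral.integral_const_mul, hcV]
        simp
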